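/- arXiv:2201.06800 — 3 statements merged into one kernel-verified Lean document; each statement's English description precedes it below -/
import Mathlib

section
/- Let u ∈ dom d and p ∈ 𝔥. Suppose u = d m + δ n + o with m ∈ dom d, n ∈ dom δ, o ∈ 𝔥, and m = d r + δ s + t with r ∈ dom d, s ∈ dom δ, t ∈ 𝔥. Set v := d(δ n) + δ s + p and q := o. Then the test pair (v, q) is controlled by (u, p): ‖v‖² + ‖d v‖² + ‖q‖² ≤ (1 + c_p²) ‖u‖² + ‖d u‖² + ‖p‖². -/
open scoped LinearPMap

local notation "⟪" x ", " y "⟫" => @inner ℝ _ _ x y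

/-- The harmonic space `𝔥 = {h ∈ dom d ∩ dom δ : d h = 0 and δ h = 0}` associated to a
densely defined operator `d` on a real Hilbert space, where `δ = d†` is the Hilbert adjoint. -/
def Harmonic {W : Type*} [NormedAddCommGroup W] [InnerProductSpace ℝ W] [CompleteSpace W]
    (d : W →ₗ.[ℝ] W) : Set W :=
  {h | ∃ (h₁ : h ∈ d.domain) (h₂ : h ∈ d†.domain), d ⟨h, h₁⟩ = 0 ∧ d† ⟨h, h₂⟩ = 0}


lemma dmap_congr {W : Type*} [NormedAddCommGroup W] [InnerProductSpace ℝ W]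
    (d : W →ₗ.[ℝ] W) (x y : d.domain) (h : (x:W) = (y:W)) : d x = d y := by
  congr 1; exact Subtype.ext h

lemma pyth3 {W : Type*} [NormedAddCommGroup W] [InnerProductSpace ℝ W]
    (a b c : W) (hab : ⟪a,b⟫ = 0) (hac : ⟪a,c⟫ = 0) (hbc : ⟪b,c⟫ = 0) :
    ‖a+b+c‖^2 = ‖a‖^2+‖b‖^2+‖c‖^2 := by
  rw [norm_add_sq_real, norm_add_sq_real, inner_add_left, hab, hac, hbc]; ring

/-- With `u = d m + δ n + o`, `m = d r + δ s + t`, and the test pair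
`v := d(δ n) + δ s + p`, `q := o`, the test pair is controlled by `(u, p)`:
`‖v‖² + ‖d v‖² + ‖q‖² ≤ (1 + c_p²) ‖u‖² + ‖d u‖² + ‖p‖²`. -/
theorem weak_formulation_test_pair_bound
    {W : Type*} [NormedAddCommGroup W] [InnerProductSpace ℝ W] [CompleteSpace W]
    (d : W →ₗ.[ℝ] W)
    (hdense : Dense (d.domain : Set W)) (hclosed : d.IsClosed)
    (hrange : ∀ u : d.domain, d u ∈ d.domain)
    (hdd : ∀ u : d.domain, d ⟨d u, hrange u⟩ = 0)
    -- pairwise orthogonality of `range d`, `range δ` and `𝔥`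
    (horth₁ : ∀ (a : d.domain) (b : d†.domain), ⟪d a, d† b⟫ = 0)
    (horth₂ : ∀ (a : d.domain) (h : W), h ∈ Harmonic d → ⟪d a, h⟫ = 0)
    (horth₃ : ∀ (b : d†.domain) (h : W), h ∈ Harmonic d → ⟪d† b, h⟫ = 0)
    -- Poincaré inequality on `range δ ∩ dom d` with constant `c_p > 0`
    (c_p : ℝ) (hc_p : 0 < c_p)
    (hPoincare : ∀ (b : d†.domain) (hx : (d† b : W) ∈ d.domain),
      ‖(d† b : W)‖ ≤ c_p * ‖d ⟨d† b, hx⟩‖)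
    -- the data: `u ∈ dom d`, `p ∈ 𝔥`, and the two Hodge decompositions
    (u m r : d.domain) (n s : d†.domain) (o t p : W)
    (ho : o ∈ Harmonic d) (ht : t ∈ Harmonic d) (hp : p ∈ Harmonic d)
    (hu : (u : W) = d m + d† n + o)
    (hm : (m : W) = d r + d† s + t)
    -- `δ n ∈ dom d` and `v := d(δ n) + δ s + p ∈ dom d`
    -- (both indeed follow from the decompositions of `u` and `m`)
    (hδn : (d† n : W) ∈ d.domain)
    (hv : d ⟨d† n, hδn⟩ + d† s + p ∈ d.domain) :
    ‖d ⟨d† n, hδn⟩ + d† s + p‖ ^ 2 + ‖d ⟨d ⟨d† n, hδn⟩ + d† s + p, hv⟩‖ ^ 2 + ‖o‖ ^ 2 ≤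
      (1 + c_p ^ 2) * ‖(u : W)‖ ^ 2 + ‖d u‖ ^ 2 + ‖p‖ ^ 2 := by
  obtain ⟨ho₁, ho₂, hod, hoδ⟩ := ho
  obtain ⟨ht₁, ht₂, htd, htδ⟩ := ht
  obtain ⟨hp₁, hp₂, hpd, hpδ⟩ := hp
  have hδs : (d† s : W) ∈ d.domain := by
    have h1 : (d† s : W) = (m : W) - d r - t := by rw [hm]; abel
    rw [h1]
    exact sub_mem (sub_mem m.2 (hrange r)) ht₁
  have hdm : d m = d ⟨(d† s : W), hδs⟩ := by
    have h1 : d m = d (⟨(d r : W), hrange r⟩ + ⟨(d† s : W), hδs⟩ + ⟨t, ht₁⟩) :=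
      dmap_congr d _ _ hm
    rw [h1, d.map_add, d.map_add, hdd r, htd, zero_add, add_zero]
  have hdu : d u = d ⟨(d† n : W), hδn⟩ := by
    have h1 : d u = d (⟨(d m : W), hrange m⟩ + ⟨(d† n : W), hδn⟩ + ⟨o, ho₁⟩) :=
      dmap_congr d _ _ hu
    rw [h1, d.map_add, d.map_add, hdd m, hod, zero_add, add_zero]
  have hdv : d ⟨d ⟨d† n, hδn⟩ + d† s + p, hv⟩ = d m := by
    have h1 : d ⟨d ⟨(d† n : W), hδn⟩ + d† s + p, hv⟩ =
        d (⟨(d ⟨(d† n : W), hδn⟩ : W), hrange _⟩ + ⟨(d† s : W), hδs⟩ + ⟨p, hp₁⟩) :=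
      dmap_congr d _ _ rfl
    rw [h1, d.map_add, d.map_add, hdd, hpd, zero_add, add_zero, hdm]
  have hnv : ‖d ⟨(d† n : W), hδn⟩ + d† s + p‖^2 =
      ‖d ⟨(d† n : W), hδn⟩‖^2 + ‖(d† s : W)‖^2 + ‖p‖^2 :=
    pyth3 _ _ _ (horth₁ _ s) (horth₂ _ p ⟨hp₁, hp₂, hpd, hpδ⟩) (horth₃ s p ⟨hp₁, hp₂, hpd, hpδ⟩)
  have hnu : ‖(u : W)‖^2 = ‖(d m : W)‖^2 + ‖(d† n : W)‖^2 + ‖o‖^2 := by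
    rw [hu]
    exact pyth3 _ _ _ (horth₁ m n) (horth₂ m o ⟨ho₁, ho₂, hod, hoδ⟩)
      (horth₃ n o ⟨ho₁, ho₂, hod, hoδ⟩)
  have hP : ‖(d† s : W)‖ ≤ c_p * ‖(d m : W)‖ := by
    rw [hdm]; exact hPoincare s hδs
  have hP2 : ‖(d† s : W)‖^2 ≤ c_p^2 * ‖(d m : W)‖^2 := by
    have := mul_self_le_mul_self (norm_nonneg _) hP
    nlinarith [norm_nonneg (d† s : W), norm_nonneg (d m : W)]
  rw [hnv, hdv, hdu, hnu]
  nlinarith [norm_nonneg (d m : W), norm_nonneg (d† n : W), norm_nonneg o,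
    norm_nonneg p, sq_nonneg (‖(d† n : W)‖), sq_nonneg ‖o‖, sq_nonneg c_p,
    mul_nonneg (sq_nonneg c_p) (sq_nonneg ‖(d† n : W)‖),
    mul_nonneg (sq_nonneg c_p) (sq_nonneg ‖o‖)]
end

section
/- Under the Hodge decomposition hypothesis, the Hodge–Dirac operator is bijective on the orthogonal complement of the harmonic space: for every f ∈ W orthogonal to 𝔥 there exists a unique w ∈ dom d ∩ dom δ with w orthogonal to 𝔥 such that d w + δ w = f. -/
open scoped LinearPMap

local notation "⟪" x ", " y "⟫" => @inner ℝ _ _ x y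

/-- Applying a `LinearPMap` only depends on the underlying element. -/
theorem pmap_congr {W : Type*} [NormedAddCommGroup W] [InnerProductSpace ℝ W]
    (d : W →ₗ.[ℝ] W) (x y : d.domain) (h : (x : W) = y) : d x = d y := by
  congr 1
  exact Subtype.ext h

/-- Under the Hodge decomposition hypothesis, the Hodge–Dirac operator is
bijective on the orthogonal complement of the harmonic space: for every `f ∈ W` orthogonal
to `𝔥` there exists a unique `w ∈ dom d ∩ dom δ`, orthogonal to `𝔥`, with `d w + δ w = f`. -/
theorem hodgeDirac_bijective_on_harmonic_complement
    {W : Type*} [NormedAddCommGroup W] [InnerProductSpace ℝ W] [CompleteSpace W]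
    (d : W →ₗ.[ℝ] W)
    (hdense : Dense (d.domain : Set W)) (hclosed : d.IsClosed)
    (hrange : ∀ u : d.domain, d u ∈ d.domain)
    (hdd : ∀ u : d.domain, d ⟨d u, hrange u⟩ = 0)
    -- Hodge decomposition hypothesis: existence of the decomposition
    (hHodge : ∀ f : W, ∃ (a : d.domain) (b : d†.domain) (h : W),
      h ∈ Harmonic d ∧ f = d a + d† b + h)
    -- pairwise orthogonality of `range d`, `range δ` and `𝔥`
    (horth₁ : ∀ (a : d.domain) (b : d†.domain), ⟪d a, d† b⟫ = 0)
    (horth₂ : ∀ (a : d.domain) (h : W), h ∈ Harmonic d → ⟪d a, h⟫ = 0)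
    (horth₃ : ∀ (b : d†.domain) (h : W), h ∈ Harmonic d → ⟪d† b, h⟫ = 0) :
    ∀ f : W, (∀ h ∈ Harmonic d, ⟪f, h⟫ = 0) →
      ∃ (w : W) (hw₁ : w ∈ d.domain) (hw₂ : w ∈ d†.domain),
        (∀ h ∈ Harmonic d, ⟪w, h⟫ = 0) ∧
        d ⟨w, hw₁⟩ + d† ⟨w, hw₂⟩ = f ∧
        ∀ (w' : W) (hw₁' : w' ∈ d.domain) (hw₂' : w' ∈ d†.domain),
          (∀ h ∈ Harmonic d, ⟪w', h⟫ = 0) →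
          d ⟨w', hw₁'⟩ + d† ⟨w', hw₂'⟩ = f → w' = w := by
  intro f hf
  have hadj : d†.IsFormalAdjoint d := LinearPMap.adjoint_isFormalAdjoint hdense
  -- δ ∘ δ = 0 (with domain membership)
  have hδδ : ∀ b : d†.domain, ∃ m : (d† b : W) ∈ d†.domain, d† ⟨d† b, m⟩ = 0 := by
    intro b
    have key : ∀ x : d.domain, ⟪(0 : W), (x : W)⟫ = ⟪(d† b : W), d x⟫ := by
      intro x
      have h1 := hadj b ⟨d x, hrange x⟩
      rw [hdd x] at h1
      simp only [inner_zero_right, inner_zero_left] at h1 ⊢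
      exact h1.symm
    have m : (d† b : W) ∈ d†.domain :=
      LinearPMap.mem_adjoint_domain_of_exists _ ⟨0, key⟩
    exact ⟨m, LinearPMap.adjoint_apply_eq hdense _ key⟩
  -- decompose f ; harmonic part vanishes
  obtain ⟨a, b, h, hh, hf_eq⟩ := hHodge f
  have hh0 : h = 0 := by
    have h1 : ⟪f, h⟫ = 0 := hf h hh
    rw [hf_eq, inner_add_left, inner_add_left, horth₂ a h hh, horth₃ b h hh] at h1
    simpa [inner_self_eq_zero] using h1
  have hf_eq' : f = d a + d† b := by rw [hf_eq, hh0, add_zero]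
  -- decompose a
  obtain ⟨a₁, b₁, h₁, hh₁, ha⟩ := hHodge (a : W)
  obtain ⟨m₁, m₁', hdh₁, hδh₁⟩ := hh₁
  have hb₁eq : (d† b₁ : W) = (a : W) - d a₁ - h₁ := by rw [ha]; abel
  have hs₁ : (d† b₁ : W) ∈ d.domain := by
    rw [hb₁eq]; exact sub_mem (sub_mem a.2 (hrange a₁)) m₁
  have hdval : d ⟨d† b₁, hs₁⟩ = d a := by
    have e1 : d ⟨d† b₁, hs₁⟩ = d (a - ⟨d a₁, hrange a₁⟩ - ⟨h₁, m₁⟩) :=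
      pmap_congr d _ _ (by simpa using hb₁eq)
    rw [e1, d.map_sub, d.map_sub, hdd a₁, hdh₁, sub_zero, sub_zero]
  -- decompose b
  obtain ⟨a₂, b₂, h₂, hh₂, hb⟩ := hHodge (b : W)
  obtain ⟨n₁, n₁', hdh₂, hδh₂⟩ := hh₂
  obtain ⟨mδ₂, hδδ₂⟩ := hδδ b₂
  have ha₂eq : (d a₂ : W) = (b : W) - d† b₂ - h₂ := by rw [hb]; abel
  have hs₂ : (d a₂ : W) ∈ d†.domain := by
    rw [ha₂eq]; exact sub_mem (sub_mem b.2 mδ₂) n₁'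
  have hδval : d† ⟨d a₂, hs₂⟩ = d† b := by
    have e1 : d† ⟨d a₂, hs₂⟩ = d† (b - ⟨d† b₂, mδ₂⟩ - ⟨h₂, n₁'⟩) :=
      pmap_congr d† _ _ (by simpa using ha₂eq)
    rw [e1, d†.map_sub, d†.map_sub, hδδ₂, hδh₂, sub_zero, sub_zero]
  obtain ⟨mδ₁, hδδ₁⟩ := hδδ b₁
  -- the solution
  refine ⟨(d† b₁ : W) + d a₂, add_mem hs₁ (hrange a₂), add_mem mδ₁ hs₂, ?_, ?_, ?_⟩
  · intro h' hh'
    rw [inner_add_left, horth₃ b₁ h' hh', horth₂ a₂ h' hh', add_zero]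
  · have e1 : d ⟨(d† b₁ : W) + d a₂, _⟩ =
        d (⟨d† b₁, hs₁⟩ + ⟨d a₂, hrange a₂⟩) := pmap_congr d _ _ rfl
    have e2 : d† ⟨(d† b₁ : W) + d a₂, _⟩ =
        d† (⟨d† b₁, mδ₁⟩ + ⟨d a₂, hs₂⟩) := pmap_congr d† _ _ rfl
    rw [e1, e2, d.map_add, d†.map_add, hdval, hdd a₂, hδδ₁, hδval, add_zero, zero_add, hf_eq']
  · -- uniqueness
    set w : W := (d† b₁ : W) + d a₂ with hw_def
    have hw₁ : w ∈ d.domain := add_mem hs₁ (hrange a₂)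
    have hw₂ : w ∈ d†.domain := add_mem mδ₁ hs₂
    have hworth : ∀ h' ∈ Harmonic d, ⟪w, h'⟫ = 0 := by
      intro h' hh'
      rw [hw_def, inner_add_left, horth₃ b₁ h' hh', horth₂ a₂ h' hh', add_zero]
    have hwsum : d ⟨w, hw₁⟩ + d† ⟨w, hw₂⟩ = f := by
      have e1 : d ⟨w, hw₁⟩ = d (⟨d† b₁, hs₁⟩ + ⟨d a₂, hrange a₂⟩) := pmap_congr d _ _ rfl
      have e2 : d† ⟨w, hw₂⟩ = d† (⟨d† b₁, mδ₁⟩ + ⟨d a₂, hs₂⟩) := pmap_congr d† _ _ rfl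
      rw [e1, e2, d.map_add, d†.map_add, hdval, hdd a₂, hδδ₁, hδval, add_zero, zero_add, hf_eq']
    intro w' hw₁' hw₂' hw'orth hw'sum
    set v : W := w' - w with hv_def
    have hv₁ : v ∈ d.domain := sub_mem hw₁' hw₁
    have hv₂ : v ∈ d†.domain := sub_mem hw₂' hw₂
    have hdv : d ⟨v, hv₁⟩ = d ⟨w', hw₁'⟩ - d ⟨w, hw₁⟩ := by
      have e1 : d ⟨v, hv₁⟩ = d (⟨w', hw₁'⟩ - ⟨w, hw₁⟩) := pmap_congr d _ _ rfl
      rw [e1, d.map_sub]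
    have hδv : d† ⟨v, hv₂⟩ = d† ⟨w', hw₂'⟩ - d† ⟨w, hw₂⟩ := by
      have e1 : d† ⟨v, hv₂⟩ = d† (⟨w', hw₂'⟩ - ⟨w, hw₂⟩) := pmap_congr d† _ _ rfl
      rw [e1, d†.map_sub]
    have hsum0 : d ⟨v, hv₁⟩ + d† ⟨v, hv₂⟩ = 0 := by
      rw [hdv, hδv]
      have := hw'sum
      rw [← hwsum] at this
      linear_combination (norm := abel) this - hwsum + hwsum
    have hcross : ⟪d ⟨v, hv₁⟩, d† ⟨v, hv₂⟩⟫ = 0 := horth₁ ⟨v, hv₁⟩ ⟨v, hv₂⟩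
    have hdv0 : d ⟨v, hv₁⟩ = 0 := by
      have h1 : ⟪d ⟨v, hv₁⟩ + d† ⟨v, hv₂⟩, d ⟨v, hv₁⟩⟫ = 0 := by rw [hsum0, inner_zero_left]
      have hcross' : ⟪(d† ⟨v, hv₂⟩ : W), (d ⟨v, hv₁⟩ : W)⟫ = 0 := by
        rw [real_inner_comm]; exact hcross
      rw [inner_add_left, hcross', add_zero] at h1
      exact inner_self_eq_zero.mp h1
    have hδv0 : d† ⟨v, hv₂⟩ = 0 := by
      have := hsum0
      rw [hdv0, zero_add] at this
      exact this
    have hvh : v ∈ Harmonic d := ⟨hv₁, hv₂, hdv0, hδv0⟩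
    have hvv : ⟪v, v⟫ = 0 := by
      rw [hv_def, inner_sub_left, hw'orth v hvh, hworth v hvh, sub_zero]
    have : v = 0 := inner_self_eq_zero.mp hvv
    have := sub_eq_zero.mp this
    exact this
end

section
/- A solution of the mixed weak formulation solves the Hodge–Dirac equation up to harmonic projection: if f ∈ W and (u, p) ∈ dom d × 𝔥 satisfy ⟨d u, v⟩ + ⟨u, d v⟩ + ⟨p, v⟩ = ⟨f, v⟩ for all v ∈ dom d, then u ∈ dom δ and d u + δ u = f − p. -/
open scoped LinearPMap

local notation "⟪" x ", " y "⟫" => @inner ℝ _ _ x y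

/-- A solution of the mixed weak formulation solves the Hodge–Dirac
equation up to harmonic projection: if `f ∈ W` and `(u, p) ∈ dom d × 𝔥` satisfy
`⟨d u, v⟩ + ⟨u, d v⟩ + ⟨p, v⟩ = ⟨f, v⟩` for all `v ∈ dom d`, then `u ∈ dom δ` and
`d u + δ u = f − p`. -/
theorem mixed_weak_solution_solves_hodgeDirac
    {W : Type*} [NormedAddCommGroup W] [InnerProductSpace ℝ W] [CompleteSpace W]
    (d : W →ₗ.[ℝ] W)
    (hdense : Dense (d.domain : Set W)) (hclosed : d.IsClosed)
    (hrange : ∀ u : d.domain, d u ∈ d.domain)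
    (hdd : ∀ u : d.domain, d ⟨d u, hrange u⟩ = 0)
    (f : W) (u : d.domain) (p : W) (hp : p ∈ Harmonic d)
    (hweak : ∀ v : d.domain,
      ⟪d u, (v : W)⟫ + ⟪(u : W), d v⟫ + ⟪p, (v : W)⟫ = ⟪f, (v : W)⟫) :
    ∃ hu : (u : W) ∈ d†.domain, d u + d† ⟨(u : W), hu⟩ = f - p := by
  have key : ∀ v : d.domain, ⟪f - p - d u, (v : W)⟫ = ⟪(u : W), d v⟫ := by
    intro v
    have := hweak v
    simp only [inner_sub_left]
    linarith
  have hu : (u : W) ∈ d†.domain :=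
    LinearPMap.mem_adjoint_domain_of_exists (u : W) ⟨f - p - d u, key⟩
  refine ⟨hu, ?_⟩
  have : d† ⟨(u : W), hu⟩ = f - p - d u :=
    LinearPMap.adjoint_apply_eq hdense ⟨(u : W), hu⟩ key
  rw [this]; abel
end
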